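/- arXiv:2012.02623 — 4 statements merged into one kernel-verified Lean document; each statement's English description precedes it below -/
import Mathlib

section
/- The total number of ties, summed over all contained k-Naples (m,n)-parking functions, equals the total number of ties summed over all classical (m,n)-parking functions: Σ_{f ∈ B(m,n;k)} ties(f) = Σ_{g ∈ PF(m,n)} ties(g), for all 1 ≤ m ≤ n and 0 ≤ k ≤ n-1. -/
/-- The first unoccupied spot `s` with `p ≤ s ≤ n`, if any. -/
def forwardSpot (n : ℕ) (occ : Finset ℕ) (p : ℕ) : Option ℕ :=
  (List.range' p (n + 1 - p)).find? (fun s => decide (s ∉ occ))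

/-- Classical (forward-only) parking process: cars park one by one, each at the
first free spot `≥` its preference; returns the final occupied set if all park. -/
def classicalPark (n : ℕ) : List ℕ → Finset ℕ → Option (Finset ℕ)
  | [], occ => some occ
  | p :: rest, occ =>
    match forwardSpot n occ p with
    | none => none
    | some s => classicalPark n rest (insert s occ)

/-- Backward candidates `p-1, p-2, …, p-k` that are at least `1`. -/
def backwardCandidates (k p : ℕ) : List ℕ :=
  ((List.range k).map (fun i => p - (i + 1))).filter (fun s => decide (1 ≤ s))

/-- The spot where a car with preference `p` parks under the `k`-Naples rule. -/
def naplesSpot (n k : ℕ) (occ : Finset ℕ) (p : ℕ) : Option ℕ :=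
  if p ∈ occ then
    match (backwardCandidates k p).find? (fun s => decide (s ∉ occ)) with
    | some s => some s
    | none => forwardSpot n occ p
  else some p

/-- `k`-Naples parking process; returns the final occupied set if all cars park. -/
def naplesPark (n k : ℕ) : List ℕ → Finset ℕ → Option (Finset ℕ)
  | [], occ => some occ
  | p :: rest, occ =>
    match naplesSpot n k occ p with
    | none => none
    | some s => naplesPark n k rest (insert s occ)

/-- All cars park under the `k`-Naples rule and no car with preference `p ≤ k`
finds all of `1, …, p` occupied (no car exits the lot searching backward). -/
def naplesContainedAux (n k : ℕ) : List ℕ → Finset ℕ → Bool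
  | [], _ => true
  | p :: rest, occ =>
    (decide (p ≤ k → ¬ Finset.Icc 1 p ⊆ occ)) &&
    match naplesSpot n k occ p with
    | none => false
    | some s => naplesContainedAux n k rest (insert s occ)

/-- The (1-based) preference list of `a : Fin m → Fin n`. -/
def prefList {m n : ℕ} (a : Fin m → Fin n) : List ℕ :=
  (List.ofFn a).map (fun x => (x : ℕ) + 1)

/-- The set of classical `(m,n)`-parking functions. -/
def PFset (m n : ℕ) : Finset (Fin m → Fin n) :=
  Finset.univ.filter (fun a => (classicalPark n (prefList a) ∅).isSome)

/-- The set of `k`-Naples `(m,n)`-parking functions. -/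
def NPFset (m n k : ℕ) : Finset (Fin m → Fin n) :=
  Finset.univ.filter (fun a => (naplesPark n k (prefList a) ∅).isSome)

/-- The set of contained `k`-Naples `(m,n)`-parking functions. -/
def Bset (m n k : ℕ) : Finset (Fin m → Fin n) :=
  Finset.univ.filter (fun a => naplesContainedAux n k (prefList a) ∅)

/-- The set of `k`-left obstructed `(m,n)`-parking functions: `m` cars on
`n + k` spots whose first `k` spots are obstructed, forward-only rule. -/
def LPFset (m n k : ℕ) : Finset (Fin m → Fin (n + k)) :=
  Finset.univ.filter (fun a => (classicalPark (n + k) (prefList a) (Finset.Icc 1 k)).isSome)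

/-- The number of ties (adjacent equal preferences) of a preference sequence. -/
def ties {m n : ℕ} (a : Fin m → Fin n) : ℕ :=
  (Finset.univ.filter
    (fun j : Fin m => ∃ h : (j : ℕ) + 1 < m, a j = a ⟨(j : ℕ) + 1, h⟩)).card



namespace TiesAux

/-- Characterization of `find?` on a mapped range. -/
theorem find?_mrange {α : Type*} {f : ℕ → α} {q : α → Bool} {t : ℕ} {a : α} :
    ((List.range t).map f).find? q = some a ↔
      ∃ i, i < t ∧ q (f i) = true ∧ f i = a ∧ ∀ j < i, q (f j) = false := by
  induction t generalizing a with
  | zero => simp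
  | succ t ih =>
    rw [List.range_succ, List.map_append, List.find?_append]
    cases h : ((List.range t).map f).find? q with
    | none =>
      have hnone : ∀ j < t, q (f j) = false := by
        intro j hj
        have := List.find?_eq_none.mp h (f j) (by simp; exact ⟨j, hj, rfl⟩)
        simpa using this
      simp only [h, Option.none_or]
      constructor
      · intro hfind
        simp only [List.map_cons, List.map_nil, List.find?_cons, List.find?_nil] at hfind
        rcases hq : q (f t) with _ | _
        · rw [hq] at hfind; exact absurd hfind (by simp)
        · rw [hq] at hfind
          refine ⟨t, by omega, hq, by simpa using hfind, hnone⟩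
      · rintro ⟨i, hit, hq, hfa, hj⟩
        have hi : i = t := by
          rcases Nat.lt_succ_iff_lt_or_eq.mp hit with h' | h'
          · exact absurd hq (by simp [hnone i h'])
          · exact h'
        rw [hi] at hq hfa
        rw [← hfa]
        simp [List.find?, hq]
    | some b =>
      have hor : (some b).or (((List.map f [t]).find? q)) = some b := rfl
      simp only [h, hor]
      obtain ⟨i₀, hi₀t, hq₀, hfb, hmin₀⟩ := ih.mp h
      constructor
      · rintro hba
        rw [← Option.some_inj.mp hba] at *
        exact ⟨i₀, by omega, hq₀, hfb, hmin₀⟩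
      · rintro ⟨i, hit, hq, hfa, hj⟩
        have hii : i = i₀ := by
          by_contra hne
          rcases Nat.lt_or_ge i i₀ with h' | h'
          · exact absurd hq (by simp [hmin₀ i h'])
          · have h'' : i₀ < i := by omega
            exact absurd hq₀ (by simp [hj i₀ h''])
        rw [← hfa, hii, hfb]

theorem find?_mrange_none {α : Type*} {f : ℕ → α} {q : α → Bool} {t : ℕ} :
    ((List.range t).map f).find? q = none ↔ ∀ i < t, q (f i) = false := by
  rw [List.find?_eq_none]
  constructor
  · intro h i hi
    have := h (f i) (by simp; exact ⟨i, hi, rfl⟩)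
    simpa using this
  · intro h x hx
    simp at hx
    obtain ⟨i, hi, rfl⟩ := hx
    simp [h i hi]

theorem map_filter' {α β : Type*} (f : α → β) (q : β → Bool) (l : List α) :
    (l.map f).filter q = (l.filter (fun x => q (f x))).map f := by
  induction l with
  | nil => rfl
  | cons a l ih =>
    simp only [List.map_cons, List.filter_cons]
    cases h : q (f a) <;> simp [h, ih]

theorem range_filter_lt (k c : ℕ) :
    (List.range k).filter (fun i => decide (i < c)) = List.range (min k c) := by
  induction k with
  | zero => simp
  | succ k ih =>
    rw [List.range_succ, List.filter_append, ih]
    by_cases h : k < c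
    · have h2 : min (k+1) c = (min k c) + 1 := by omega
      rw [h2, List.range_succ]
      simp [h]
      omega
    · have h2 : min (k+1) c = min k c := by omega
      rw [h2]
      simp [h]

end TiesAux


namespace TiesAux

/-- Circular candidate list: preferred spot, then `k` backward spots, then all forward spots. -/
def cands (k N : ℕ) (p : ZMod N) : List (ZMod N) :=
  p :: (((List.range k).map fun i : ℕ => p - ((i : ZMod N) + 1)) ++
        ((List.range N).map fun i : ℕ => p + ((i : ZMod N) + 1)))

/-- Circular parking spot. -/
def cSpot (k : ℕ) {N : ℕ} (occ : Finset (ZMod N)) (p : ZMod N) : ZMod N :=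
  ((cands k N p).find? (fun s => decide (s ∉ occ))).getD 0

/-- Circular parking process. -/
def cPark (k : ℕ) {N : ℕ} : List (ZMod N) → Finset (ZMod N) → Finset (ZMod N)
  | [], occ => occ
  | p :: rest, occ => cPark k rest (insert (cSpot k occ p) occ)

theorem mem_cands {N : ℕ} [NeZero N] (k : ℕ) (p s : ZMod N) : s ∈ cands k N p := by
  unfold cands
  refine List.mem_cons_of_mem _ (List.mem_append_right _ ?_)
  rw [List.mem_map]
  refine ⟨(s - p - 1).val, ?_, ?_⟩
  · exact List.mem_range.mpr (ZMod.val_lt (s - p - 1))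
  show p + (((s - p - 1).val : ZMod N) + 1) = s
  rw [ZMod.natCast_rightInverse (s - p - 1)]
  ring

theorem cSpot_find {N : ℕ} [NeZero N] (k : ℕ) {occ : Finset (ZMod N)}
    (h : occ ≠ Finset.univ) (p : ZMod N) :
    (cands k N p).find? (fun s => decide (s ∉ occ)) = some (cSpot k occ p) ∧
      cSpot k occ p ∉ occ := by
  have hne : ∃ s₀, s₀ ∉ occ := by
    by_contra h'
    push_neg at h'
    exact h (Finset.eq_univ_iff_forall.mpr h')
  obtain ⟨s₀, hs₀⟩ := hne
  have hsome : ((cands k N p).find? (fun s => decide (s ∉ occ))).isSome := by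
    rw [List.find?_isSome]
    exact ⟨s₀, mem_cands k p s₀, by simpa using hs₀⟩
  obtain ⟨s, hs⟩ := Option.isSome_iff_exists.mp hsome
  have hfree := List.find?_some hs
  have : cSpot k occ p = s := by unfold cSpot; rw [hs]; rfl
  rw [this, hs]
  exact ⟨rfl, by simpa using hfree⟩

theorem cands_add (k N : ℕ) (p c : ZMod N) :
    cands k N (p + c) = (cands k N p).map (· + c) := by
  simp only [cands, List.map_cons, List.map_append, List.map_map]
  refine congrArg₂ _ rfl (congrArg₂ _ ?_ ?_) <;>
  · refine congrArg₂ _ ?_ rfl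
    funext i
    simp only [Function.comp_apply]
    ring

theorem cSpot_add {N : ℕ} [NeZero N] (k : ℕ) {occ : Finset (ZMod N)}
    (h : occ ≠ Finset.univ) (p c : ZMod N) :
    cSpot k (occ.image (· + c)) (p + c) = cSpot k occ p + c := by
  obtain ⟨hfind, -⟩ := cSpot_find k h p
  have hpred : ((fun s => decide (s ∉ occ.image (· + c))) ∘ (· + c)) =
      (fun s => decide (s ∉ occ)) := by
    funext s
    simp only [Function.comp_apply, decide_eq_decide, Finset.mem_image]
    constructor
    · intro hn hm; exact hn ⟨s, hm, rfl⟩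
    · rintro hn ⟨x, hx, hxc⟩
      have : x = s := by
        have := add_right_cancel hxc; exact this
      exact hn (this ▸ hx)
  rw [cSpot, cands_add, List.find?_map, hpred, hfind]
  rfl

theorem cPark_mono (k : ℕ) {N : ℕ} :
    ∀ (l : List (ZMod N)) (occ : Finset (ZMod N)), occ ⊆ cPark k l occ := by
  intro l
  induction l with
  | nil => intro occ; exact Finset.Subset.refl _
  | cons p rest ih =>
    intro occ
    exact (Finset.subset_insert _ _).trans (ih _)

theorem ne_univ_of_card_lt {N : ℕ} [NeZero N] {occ : Finset (ZMod N)}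
    (h : occ.card < N) : occ ≠ Finset.univ := by
  intro heq
  rw [heq, Finset.card_univ, ZMod.card] at h
  omega

theorem cPark_card (k : ℕ) {N : ℕ} [NeZero N] :
    ∀ (l : List (ZMod N)) (occ : Finset (ZMod N)), occ.card + l.length ≤ N →
      (cPark k l occ).card = occ.card + l.length := by
  intro l
  induction l with
  | nil => intro occ _; simp [cPark]
  | cons p rest ih =>
    intro occ hcard
    simp only [List.length_cons] at hcard
    have hlt : occ.card < N := by omega
    obtain ⟨-, hnot⟩ := cSpot_find k (ne_univ_of_card_lt hlt) p
    have hins : (insert (cSpot k occ p) occ).card = occ.card + 1 :=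
      Finset.card_insert_of_notMem hnot
    rw [cPark, ih _ (by rw [hins]; omega), hins]
    simp only [List.length_cons]
    omega

theorem cPark_add (k : ℕ) {N : ℕ} [NeZero N] :
    ∀ (l : List (ZMod N)) (occ : Finset (ZMod N)) (c : ZMod N),
      occ.card + l.length ≤ N →
      cPark k (l.map (· + c)) (occ.image (· + c)) = (cPark k l occ).image (· + c) := by
  intro l
  induction l with
  | nil => intro occ c _; simp [cPark]
  | cons p rest ih =>
    intro occ c hcard
    simp only [List.length_cons] at hcard
    have hlt : occ.card < N := by omega
    obtain ⟨-, hnot⟩ := cSpot_find k (ne_univ_of_card_lt hlt) p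
    simp only [List.map_cons, cPark]
    rw [cSpot_add k (ne_univ_of_card_lt hlt) p c]
    have himg : insert (cSpot k occ p + c) (Finset.image (fun x => x + c) occ) =
        Finset.image (fun x => x + c) (insert (cSpot k occ p) occ) :=
      (Finset.image_insert _ _ _).symm
    rw [himg]
    exact ih _ c (by rw [Finset.card_insert_of_notMem hnot]; omega)

theorem cPark_zero_of_mem_pref (k : ℕ) {N : ℕ} :
    ∀ (l : List (ZMod N)) (occ : Finset (ZMod N)), (0 : ZMod N) ∈ l →
      (0 : ZMod N) ∈ cPark k l occ := by
  intro l
  induction l with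
  | nil => intro occ h; simp at h
  | cons p rest ih =>
    intro occ h
    rw [List.mem_cons] at h
    rcases h with h | h
    · rw [cPark]
      by_cases hocc : (0 : ZMod N) ∈ occ
      · exact cPark_mono k rest _ ((Finset.subset_insert _ _) hocc)
      · have : cSpot k occ p = 0 := by
          subst h
          simp [cSpot, cands, List.find?_cons, hocc]
        rw [this]
        exact cPark_mono k rest _ (Finset.mem_insert_self _ _)
    · exact ih _ h

end TiesAux

namespace TiesAux

section Step

variable (n k : ℕ)

/-- Cast the occupied set into the circular lot. -/
def C (n : ℕ) (occ : Finset ℕ) : Finset (ZMod (n + 1)) :=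
  occ.image (fun a : ℕ => (a : ZMod (n + 1)))

variable {n k}

theorem cast_inj {a b : ℕ} (ha : a ≤ n) (hb : b ≤ n)
    (h : (a : ZMod (n + 1)) = (b : ZMod (n + 1))) : a = b := by
  have h2 := congrArg ZMod.val h
  rwa [ZMod.val_natCast, ZMod.val_natCast, Nat.mod_eq_of_lt (by omega),
    Nat.mod_eq_of_lt (by omega)] at h2

theorem cast_ne_zero {a : ℕ} (h1 : 1 ≤ a) (h2 : a ≤ n) : (a : ZMod (n + 1)) ≠ 0 := by
  intro h
  have h3 : a = 0 := cast_inj h2 (Nat.zero_le n) (by simpa using h)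
  omega

theorem mem_C {occ : Finset ℕ} (hocc : occ ⊆ Finset.Icc 1 n) {s : ℕ} (hs : s ≤ n) :
    (s : ZMod (n + 1)) ∈ C n occ ↔ s ∈ occ := by
  unfold C
  rw [Finset.mem_image]
  constructor
  · rintro ⟨t, ht, heq⟩
    have htn : t ≤ n := (Finset.mem_Icc.mp (hocc ht)).2
    rwa [cast_inj htn hs heq] at ht
  · intro h
    exact ⟨s, h, rfl⟩

theorem zero_not_mem_C {occ : Finset ℕ} (hocc : occ ⊆ Finset.Icc 1 n) :
    (0 : ZMod (n + 1)) ∉ C n occ := by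
  unfold C
  rw [Finset.mem_image]
  rintro ⟨t, ht, heq⟩
  obtain ⟨h1, h2⟩ := Finset.mem_Icc.mp (hocc ht)
  exact cast_ne_zero h1 h2 heq

theorem backCands_eq {p : ℕ} :
    backwardCandidates k p = (List.range (min k (p - 1))).map (fun i => p - (i + 1)) := by
  unfold backwardCandidates
  rw [map_filter']
  congr 1
  have hpred : (fun x : ℕ => decide (1 ≤ p - (x + 1))) = (fun x : ℕ => decide (x < p - 1)) := by
    funext x
    rw [decide_eq_decide]
    omega
  rw [hpred, range_filter_lt]

theorem forwardSpot_eq (occ : Finset ℕ) (p : ℕ) :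
    forwardSpot n occ p =
      ((List.range (n + 1 - p)).map (fun i => p + i)).find? (fun s => decide (s ∉ occ)) := by
  unfold forwardSpot
  rw [List.range'_eq_map_range]

/-- The circular candidate search agrees with the linear Naples rule on good steps. -/
theorem step_good {occ : Finset ℕ} (hocc : occ ⊆ Finset.Icc 1 n) {p : ℕ}
    (hp : p ∈ Finset.Icc 1 n)
    (hcond : p ≤ k → ¬ Finset.Icc 1 p ⊆ occ) {s : ℕ}
    (hs : naplesSpot n k occ p = some s) :
    s ∈ Finset.Icc 1 n ∧ s ∉ occ ∧
      cSpot k (C n occ) (p : ZMod (n + 1)) = (s : ZMod (n + 1)) := by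
  obtain ⟨hp1, hpn⟩ := Finset.mem_Icc.mp hp
  by_cases hpo : p ∈ occ
  · -- p occupied
    rw [naplesSpot, if_pos hpo] at hs
    have hhead : (fun x => decide (x ∉ C n occ)) ((p : ZMod (n + 1))) = false := by
      simp [mem_C hocc hpn, hpo]
    have hhead' : ∀ l : List (ZMod (n+1)), List.find? (fun x => decide (x ∉ C n occ)) ((p : ZMod (n+1)) :: l) = List.find? (fun x => decide (x ∉ C n occ)) l := by
      intro l
      exact List.find?_cons_of_neg (by simpa using hhead)
    cases hb : (backwardCandidates k p).find? (fun s => decide (s ∉ occ)) with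
    | some s' =>
      rw [hb] at hs
      have hss : s' = s := by simpa using hs
      subst hss
      rw [backCands_eq] at hb
      obtain ⟨i₀, hi₀, hq₀, hf₀, hmin₀⟩ := find?_mrange.mp hb
      have hfree : p - (i₀ + 1) ∉ occ := by simpa using hq₀
      have hi₀p : i₀ < p - 1 := lt_of_lt_of_le hi₀ (min_le_right _ _)
      have hs1 : 1 ≤ s' := by omega
      have hsn : s' ≤ n := by omega
      refine ⟨Finset.mem_Icc.mpr ⟨hs1, hsn⟩, hf₀ ▸ hfree, ?_⟩
      unfold cSpot cands
      rw [hhead', List.find?_append]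
      have hB : ((List.range k).map fun i : ℕ =>
          (p : ZMod (n + 1)) - ((i : ZMod (n + 1)) + 1)).find?
            (fun x => decide (x ∉ C n occ)) = some ((s' : ZMod (n + 1))) := by
        rw [find?_mrange]
        refine ⟨i₀, lt_of_lt_of_le hi₀ (min_le_left _ _), ?_, ?_, ?_⟩
        · have hcast : (p : ZMod (n + 1)) - ((i₀ : ZMod (n + 1)) + 1) =
              ((p - (i₀ + 1) : ℕ) : ZMod (n + 1)) := by
            rw [Nat.cast_sub (by omega)]
            push_cast
            ring
          rw [hcast, hf₀]
          simp only [decide_eq_true_eq]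
          rw [mem_C hocc hsn]
          exact hf₀ ▸ hfree
        · have hcast : (p : ZMod (n + 1)) - ((i₀ : ZMod (n + 1)) + 1) =
              ((p - (i₀ + 1) : ℕ) : ZMod (n + 1)) := by
            rw [Nat.cast_sub (by omega)]
            push_cast
            ring
          rw [hcast, hf₀]
        · intro j hj
          have hmem : p - (j + 1) ∈ occ := by
            have := hmin₀ j hj
            simpa using this
          have hcast : (p : ZMod (n + 1)) - ((j : ZMod (n + 1)) + 1) =
              ((p - (j + 1) : ℕ) : ZMod (n + 1)) := by
            rw [Nat.cast_sub (by omega)]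
            push_cast
            ring
          rw [hcast]
          simp only [decide_eq_false_iff_not, not_not]
          exact (mem_C hocc (by omega : p - (j + 1) ≤ n)).mpr hmem
      rw [hB]
      rfl
    | none =>
      rw [hb] at hs
      -- spot found by forward search; first show k < p
      rw [backCands_eq] at hb
      have hball : ∀ i < min k (p - 1), p - (i + 1) ∈ occ := by
        intro i hi
        have := find?_mrange_none.mp hb i hi
        simpa using this
      have hkp : k < p := by
        by_contra hkp'
        push_neg at hkp'
        obtain ⟨t, ht, htocc⟩ := Finset.not_subset.mp (hcond hkp')
        obtain ⟨ht1, htp⟩ := Finset.mem_Icc.mp ht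
        have htp' : t ≤ p - 1 := by
          by_contra h'
          have ht' : t = p := by omega
          exact htocc (ht' ▸ hpo)
        have : p - ((p - t - 1) + 1) ∈ occ := hball _ (by omega)
        have heq : p - ((p - t - 1) + 1) = t := by omega
        rw [heq] at this
        exact htocc this
      rw [forwardSpot_eq] at hs
      obtain ⟨i₀, hi₀, hq₀, hf₀, hmin₀⟩ := find?_mrange.mp hs
      have hfree : p + i₀ ∉ occ := by simpa using hq₀
      have hi₀1 : 1 ≤ i₀ := by
        by_contra h0
        push_neg at h0
        interval_cases i₀
        simp at hq₀
        exact hq₀ hpo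
      have hs1 : 1 ≤ s := by omega
      have hsn : s ≤ n := by omega
      refine ⟨Finset.mem_Icc.mpr ⟨hs1, hsn⟩, hf₀ ▸ hfree, ?_⟩
      unfold cSpot cands
      rw [hhead', List.find?_append]
      have hB : ((List.range k).map fun i : ℕ =>
          (p : ZMod (n + 1)) - ((i : ZMod (n + 1)) + 1)).find?
            (fun x => decide (x ∉ C n occ)) = none := by
        rw [find?_mrange_none]
        intro i hi
        have hmem : p - (i + 1) ∈ occ := hball i (by omega)
        have hcast : (p : ZMod (n + 1)) - ((i : ZMod (n + 1)) + 1) =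
            ((p - (i + 1) : ℕ) : ZMod (n + 1)) := by
          rw [Nat.cast_sub (by omega)]
          push_cast
          ring
        rw [hcast]
        simp only [decide_eq_false_iff_not, not_not]
        exact (mem_C hocc (by omega : p - (i + 1) ≤ n)).mpr hmem
      have hF : ((List.range (n + 1)).map fun i : ℕ =>
          (p : ZMod (n + 1)) + ((i : ZMod (n + 1)) + 1)).find?
            (fun x => decide (x ∉ C n occ)) = some ((s : ZMod (n + 1))) := by
        rw [find?_mrange]
        refine ⟨i₀ - 1, by omega, ?_, ?_, ?_⟩
        · have hcast : (p : ZMod (n + 1)) + (((i₀ - 1 : ℕ) : ZMod (n + 1)) + 1) =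
              ((p + i₀ : ℕ) : ZMod (n + 1)) := by
            have : ((i₀ - 1 : ℕ) : ZMod (n + 1)) + 1 = ((i₀ : ℕ) : ZMod (n + 1)) := by
              rw [show (i₀ : ℕ) = (i₀ - 1) + 1 by omega]
              push_cast
              ring
            rw [this]
            push_cast
            ring
          rw [hcast, hf₀]
          simp only [decide_eq_true_eq]
          rw [mem_C hocc hsn]
          exact hf₀ ▸ hfree
        · have hcast : (p : ZMod (n + 1)) + (((i₀ - 1 : ℕ) : ZMod (n + 1)) + 1) =
              ((p + i₀ : ℕ) : ZMod (n + 1)) := by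
            have : ((i₀ - 1 : ℕ) : ZMod (n + 1)) + 1 = ((i₀ : ℕ) : ZMod (n + 1)) := by
              rw [show (i₀ : ℕ) = (i₀ - 1) + 1 by omega]
              push_cast
              ring
            rw [this]
            push_cast
            ring
          rw [hcast, hf₀]
        · intro j hj
          have hmem : p + (j + 1) ∈ occ := by
            have := hmin₀ (j + 1) (by omega)
            simpa using this
          have hcast : (p : ZMod (n + 1)) + (((j : ℕ) : ZMod (n + 1)) + 1) =
              ((p + (j + 1) : ℕ) : ZMod (n + 1)) := by
            push_cast
            ring
          rw [hcast]
          have hle : p + (j + 1) ≤ n := by omega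
          simp only [decide_eq_false_iff_not, not_not]
          exact (mem_C hocc hle).mpr hmem
      rw [hB, hF]
      rfl
  · -- p free: parks at p
    rw [naplesSpot, if_neg hpo] at hs
    have hss : p = s := by simpa using hs
    subst hss
    refine ⟨hp, hpo, ?_⟩
    unfold cSpot cands
    have hhead : (fun x => decide (x ∉ C n occ)) ((p : ZMod (n + 1))) = true := by
      simp [mem_C hocc hpn, hpo]
    rw [List.find?_cons_of_pos (by simpa using hhead)]
    rfl

end Step

end TiesAux
namespace TiesAux

section StepBad

variable {n k : ℕ}

/-- On a bad step (containment violated or no spot), the circular car parks at `0`. -/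
theorem step_bad {occ : Finset ℕ} (hocc : occ ⊆ Finset.Icc 1 n) {p : ℕ}
    (hp : p ∈ Finset.Icc 1 n)
    (h : (p ≤ k ∧ Finset.Icc 1 p ⊆ occ) ∨ naplesSpot n k occ p = none) :
    cSpot k (C n occ) (p : ZMod (n + 1)) = 0 := by
  obtain ⟨hp1, hpn⟩ := Finset.mem_Icc.mp hp
  by_cases hcase : p ≤ k ∧ Finset.Icc 1 p ⊆ occ
  · -- containment violated: circular car backs up past spot 1 to spot 0
    obtain ⟨hpk, hsub⟩ := hcase
    have hpo : p ∈ occ := hsub (Finset.mem_Icc.mpr ⟨hp1, le_refl p⟩)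
    have hhead' : ∀ l : List (ZMod (n + 1)),
        List.find? (fun x => decide (x ∉ C n occ)) ((p : ZMod (n + 1)) :: l) =
          List.find? (fun x => decide (x ∉ C n occ)) l := by
      intro l
      exact List.find?_cons_of_neg (by simp [mem_C hocc hpn, hpo])
    unfold cSpot cands
    rw [hhead', List.find?_append]
    have hB : ((List.range k).map fun i : ℕ =>
        (p : ZMod (n + 1)) - ((i : ZMod (n + 1)) + 1)).find?
          (fun x => decide (x ∉ C n occ)) = some 0 := by
      rw [find?_mrange]
      refine ⟨p - 1, by omega, ?_, ?_, ?_⟩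
      · have hcast : (p : ZMod (n + 1)) - (((p - 1 : ℕ) : ZMod (n + 1)) + 1) = 0 := by
          rw [show (((p - 1 : ℕ) : ZMod (n + 1)) + 1) = ((p : ℕ) : ZMod (n + 1)) by
            rw [show (p : ℕ) = (p - 1) + 1 by omega]; push_cast; ring]
          exact sub_self _
        rw [hcast]
        simp only [decide_eq_true_eq]
        exact zero_not_mem_C hocc
      · rw [show (((p - 1 : ℕ) : ZMod (n + 1)) + 1) = ((p : ℕ) : ZMod (n + 1)) by
            rw [show (p : ℕ) = (p - 1) + 1 by omega]; push_cast; ring]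
        exact sub_self _
      · intro j hj
        have hmem : p - (j + 1) ∈ occ := hsub (Finset.mem_Icc.mpr ⟨by omega, by omega⟩)
        have hcast : (p : ZMod (n + 1)) - ((j : ZMod (n + 1)) + 1) =
            ((p - (j + 1) : ℕ) : ZMod (n + 1)) := by
          rw [Nat.cast_sub (by omega)]
          push_cast
          ring
        rw [hcast]
        simp only [decide_eq_false_iff_not, not_not]
        exact (mem_C hocc (by omega : p - (j + 1) ≤ n)).mpr hmem
    rw [hB]
    rfl
  · -- naplesSpot is none: p occupied, backward fails, forward fails; circular car wraps to 0
    rcases h with h | hnone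
    · exact absurd h hcase
    have hpo : p ∈ occ := by
      by_contra hpo
      rw [naplesSpot, if_neg hpo] at hnone
      simp at hnone
    rw [naplesSpot, if_pos hpo] at hnone
    cases hb : (backwardCandidates k p).find? (fun s => decide (s ∉ occ)) with
    | some s' => rw [hb] at hnone; simp at hnone
    | none =>
      rw [hb] at hnone
      have hfwd : forwardSpot n occ p = none := hnone
      rw [backCands_eq] at hb
      have hball : ∀ i < min k (p - 1), p - (i + 1) ∈ occ := by
        intro i hi
        have := find?_mrange_none.mp hb i hi
        simpa using this
      have hkp : k < p := by
        by_contra hkp'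
        push_neg at hkp'
        obtain ⟨t, ht, htocc⟩ := Finset.not_subset.mp (fun hsub => hcase ⟨hkp', hsub⟩)
        obtain ⟨ht1, htp⟩ := Finset.mem_Icc.mp ht
        have htp' : t ≤ p - 1 := by
          by_contra h'
          have ht' : t = p := by omega
          exact htocc (ht' ▸ hpo)
        have hmem := hball (p - t - 1) (by omega)
        have heq : p - ((p - t - 1) + 1) = t := by omega
        rw [heq] at hmem
        exact htocc hmem
      rw [forwardSpot_eq] at hfwd
      have hfall : ∀ i < n + 1 - p, p + i ∈ occ := by
        intro i hi
        have := find?_mrange_none.mp hfwd i hi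
        simpa using this
      have hhead' : ∀ l : List (ZMod (n + 1)),
          List.find? (fun x => decide (x ∉ C n occ)) ((p : ZMod (n + 1)) :: l) =
            List.find? (fun x => decide (x ∉ C n occ)) l := by
        intro l
        exact List.find?_cons_of_neg (by simp [mem_C hocc hpn, hpo])
      unfold cSpot cands
      rw [hhead', List.find?_append]
      have hB : ((List.range k).map fun i : ℕ =>
          (p : ZMod (n + 1)) - ((i : ZMod (n + 1)) + 1)).find?
            (fun x => decide (x ∉ C n occ)) = none := by
        rw [find?_mrange_none]
        intro i hi
        have hmem : p - (i + 1) ∈ occ := hball i (by omega)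
        have hcast : (p : ZMod (n + 1)) - ((i : ZMod (n + 1)) + 1) =
            ((p - (i + 1) : ℕ) : ZMod (n + 1)) := by
          rw [Nat.cast_sub (by omega)]
          push_cast
          ring
        rw [hcast]
        simp only [decide_eq_false_iff_not, not_not]
        exact (mem_C hocc (by omega : p - (i + 1) ≤ n)).mpr hmem
      have hF : ((List.range (n + 1)).map fun i : ℕ =>
          (p : ZMod (n + 1)) + ((i : ZMod (n + 1)) + 1)).find?
            (fun x => decide (x ∉ C n occ)) = some 0 := by
        rw [find?_mrange]
        refine ⟨n - p, by omega, ?_, ?_, ?_⟩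
        · have hcast : (p : ZMod (n + 1)) + (((n - p : ℕ) : ZMod (n + 1)) + 1) = 0 := by
            rw [show (p : ZMod (n + 1)) + (((n - p : ℕ) : ZMod (n + 1)) + 1) =
                (((p + (n - p) + 1 : ℕ)) : ZMod (n + 1)) by push_cast; ring,
              show p + (n - p) + 1 = n + 1 by omega]
            exact ZMod.natCast_self _
          rw [hcast]
          simp only [decide_eq_true_eq]
          exact zero_not_mem_C hocc
        · rw [show (p : ZMod (n + 1)) + (((n - p : ℕ) : ZMod (n + 1)) + 1) =
              (((p + (n - p) + 1 : ℕ)) : ZMod (n + 1)) by push_cast; ring,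
            show p + (n - p) + 1 = n + 1 by omega]
          exact ZMod.natCast_self _
        · intro j hj
          have hmem : p + (j + 1) ∈ occ := hfall (j + 1) (by omega)
          have hcast : (p : ZMod (n + 1)) + ((j : ZMod (n + 1)) + 1) =
              ((p + (j + 1) : ℕ) : ZMod (n + 1)) := by
            push_cast
            ring
          rw [hcast]
          simp only [decide_eq_false_iff_not, not_not]
          exact (mem_C hocc (by omega : p + (j + 1) ≤ n)).mpr hmem
      rw [hB, hF]
      rfl

end StepBad

end TiesAux
namespace TiesAux

variable {n k : ℕ}

/-- Main correspondence: spot `0` stays free in the circular process iff the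
preference list is a contained `k`-Naples parking function from `occ`. -/
theorem circ_iff_contained :
    ∀ (prefs : List ℕ) (occ : Finset ℕ), occ ⊆ Finset.Icc 1 n →
      (∀ p ∈ prefs, p ∈ Finset.Icc 1 n) →
      (((0 : ZMod (n + 1)) ∉
          cPark k (prefs.map (fun a : ℕ => (a : ZMod (n + 1)))) (C n occ)) ↔
        naplesContainedAux n k prefs occ = true) := by
  intro prefs
  induction prefs with
  | nil =>
    intro occ hocc _
    simp only [List.map_nil, cPark, naplesContainedAux]
    exact ⟨fun _ => trivial, fun _ => zero_not_mem_C hocc⟩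
  | cons p rest ih =>
    intro occ hocc hpref
    have hp : p ∈ Finset.Icc 1 n := hpref p List.mem_cons_self
    have hrest : ∀ q ∈ rest, q ∈ Finset.Icc 1 n :=
      fun q hq => hpref q (List.mem_cons_of_mem p hq)
    simp only [List.map_cons, cPark]
    by_cases hcond : p ≤ k → ¬ Finset.Icc 1 p ⊆ occ
    · cases hsopt : naplesSpot n k occ p with
      | none =>
        have hc0 : cSpot k (C n occ) (p : ZMod (n + 1)) = 0 :=
          step_bad hocc hp (Or.inr hsopt)
        rw [hc0]
        apply iff_of_false
        · intro hno
          exact hno (cPark_mono k _ _ (Finset.mem_insert_self _ _))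
        · simp [naplesContainedAux, hsopt]
      | some s =>
        obtain ⟨hsIcc, hsnot, hcs⟩ := step_good hocc hp hcond hsopt
        rw [hcs]
        have himg : insert ((s : ZMod (n + 1))) (C n occ) = C n (insert s occ) :=
          (Finset.image_insert _ _ _).symm
        rw [himg]
        have hocc' : insert s occ ⊆ Finset.Icc 1 n := by
          intro t ht
          rcases Finset.mem_insert.mp ht with rfl | ht'
          · exact hsIcc
          · exact hocc ht'
        rw [ih (insert s occ) hocc' hrest]
        have hdc : decide (p ≤ k → ¬ Finset.Icc 1 p ⊆ occ) = true := decide_eq_true hcond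
        have haux : naplesContainedAux n k (p :: rest) occ =
            naplesContainedAux n k rest (insert s occ) := by
          simp only [naplesContainedAux, hsopt, hdc, Bool.true_and]
        rw [haux]
    · push_neg at hcond
      have hc0 : cSpot k (C n occ) (p : ZMod (n + 1)) = 0 :=
        step_bad hocc hp (Or.inl hcond)
      rw [hc0]
      apply iff_of_false
      · intro hno
        exact hno (cPark_mono k _ _ (Finset.mem_insert_self _ _))
      · have hdc : decide (p ≤ k → ¬ Finset.Icc 1 p ⊆ occ) = false :=
          decide_eq_false (fun himp => himp hcond.1 hcond.2)
        simp only [naplesContainedAux, hdc, Bool.false_and]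
        exact Bool.false_ne_true

theorem naplesSpot_zero {occ : Finset ℕ} {p : ℕ} (hp1 : 1 ≤ p) (hpn : p ≤ n) :
    naplesSpot n 0 occ p = forwardSpot n occ p := by
  rw [naplesSpot]
  by_cases hpo : p ∈ occ
  · rw [if_pos hpo]
    have hbc : backwardCandidates 0 p = [] := by simp [backwardCandidates]
    rw [hbc]
    rfl
  · rw [if_neg hpo]
    rw [forwardSpot_eq]
    have hfs : ((List.range (n + 1 - p)).map (fun i => p + i)).find?
        (fun s => decide (s ∉ occ)) = some p := by
      rw [find?_mrange]
      exact ⟨0, by omega, by simpa using hpo, by omega, by omega⟩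
    rw [hfs]

theorem contained_zero :
    ∀ (prefs : List ℕ) (occ : Finset ℕ),
      (∀ p ∈ prefs, p ∈ Finset.Icc 1 n) →
      naplesContainedAux n 0 prefs occ = (classicalPark n prefs occ).isSome := by
  intro prefs
  induction prefs with
  | nil => intro occ _; simp [naplesContainedAux, classicalPark]
  | cons p rest ih =>
    intro occ hpref
    have hp := Finset.mem_Icc.mp (hpref p List.mem_cons_self)
    have hrest : ∀ q ∈ rest, q ∈ Finset.Icc 1 n :=
      fun q hq => hpref q (List.mem_cons_of_mem p hq)
    have hd : decide (p ≤ 0 → ¬ Finset.Icc 1 p ⊆ occ) = true :=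
      decide_eq_true (fun h => absurd h (by omega))
    cases hfs : forwardSpot n occ p with
    | none =>
      simp [naplesContainedAux, classicalPark, naplesSpot_zero hp.1 hp.2, hfs]
    | some s =>
      simp only [naplesContainedAux, classicalPark, naplesSpot_zero hp.1 hp.2, hfs, hd,
        Bool.true_and]
      exact ih (insert s occ) hrest

end TiesAux
namespace TiesAux

theorem flatMap_pure_eq_map {α β : Type*} (f : α → β) (l : List α) :
    l.flatMap (fun a => [f a]) = l.map f := by
  induction l with
  | nil => rfl
  | cons a l ih => simp [List.flatMap_cons, ih]

theorem prefList_eq {m n : ℕ} (a : Fin m → Fin n) :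
    prefList a = List.ofFn (fun i => (a i : ℕ) + 1) := by
  unfold prefList
  simp only [List.pure_def, List.bind_eq_flatMap, flatMap_pure_eq_map, List.map_map,
    List.map_ofFn]
  rfl

/-- Ties for sequences valued in any type. -/
def tiesZ {m : ℕ} {α : Type*} [DecidableEq α] (a : Fin m → α) : ℕ :=
  (Finset.univ.filter
    (fun j : Fin m => ∃ h : (j : ℕ) + 1 < m, a j = a ⟨(j : ℕ) + 1, h⟩)).card

theorem tiesZ_congr {m : ℕ} {α β : Type*} [DecidableEq α] [DecidableEq β]
    {a : Fin m → α} {b : Fin m → β} (h : ∀ i j, a i = a j ↔ b i = b j) :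
    tiesZ a = tiesZ b := by
  unfold tiesZ
  congr 1
  apply Finset.filter_congr
  intro j _
  exact exists_congr (fun hh => h _ _)

theorem ties_eq_tiesZ {m n : ℕ} (a : Fin m → Fin n) : ties a = tiesZ a := by
  unfold ties tiesZ
  congr 1

/-- Embedding of preference sequences into the circular lot. -/
def emb (n : ℕ) {m : ℕ} (a : Fin m → Fin n) : Fin m → ZMod (n + 1) :=
  fun i => (((a i : ℕ) + 1 : ℕ) : ZMod (n + 1))

/-- Sequences for which spot `0` stays free in the circular `k`-Naples process. -/
def A0 (m n k : ℕ) : Finset (Fin m → ZMod (n + 1)) :=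
  Finset.univ.filter (fun g => (0 : ZMod (n + 1)) ∉ cPark k (List.ofFn g) ∅)

theorem prefList_Icc {m n : ℕ} (a : Fin m → Fin n) :
    ∀ p ∈ prefList a, p ∈ Finset.Icc 1 n := by
  intro p hp
  rw [prefList_eq, List.mem_ofFn] at hp
  obtain ⟨i, rfl⟩ := hp
  exact Finset.mem_Icc.mpr ⟨Nat.le_add_left 1 _, Nat.succ_le_of_lt (a i).isLt⟩

theorem list_emb {m n : ℕ} (a : Fin m → Fin n) :
    (prefList a).map (fun x : ℕ => (x : ZMod (n + 1))) = List.ofFn (emb n a) := by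
  rw [prefList_eq]
  unfold emb
  rw [List.map_ofFn]
  rfl

theorem mem_Bset_iff {m n k : ℕ} (a : Fin m → Fin n) :
    a ∈ Bset m n k ↔ (0 : ZMod (n + 1)) ∉ cPark k (List.ofFn (emb n a)) ∅ := by
  rw [Bset, Finset.mem_filter]
  simp only [Finset.mem_univ, true_and]
  rw [← list_emb]
  have h := circ_iff_contained (n := n) (k := k) (prefList a) ∅
    (by simp) (prefList_Icc a)
  rw [show C n ∅ = ∅ by simp [C]] at h
  exact h.symm

theorem sum_B_eq_A0 (m n k : ℕ) :
    ∑ f ∈ Bset m n k, ties f = ∑ g ∈ A0 m n k, tiesZ g := by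
  have himg : (Bset m n k).image (emb n) = A0 m n k := by
    ext g
    simp only [Finset.mem_image, A0, Finset.mem_filter, Finset.mem_univ, true_and]
    constructor
    · rintro ⟨a, ha, rfl⟩
      exact (mem_Bset_iff a).mp ha
    · intro hg
      have hne : ∀ i, g i ≠ 0 := by
        intro i h0
        apply hg
        apply cPark_zero_of_mem_pref
        rw [List.mem_ofFn]
        exact ⟨i, h0⟩
      have hval : ∀ i, 1 ≤ (g i).val ∧ (g i).val ≤ n := by
        intro i
        have h1 := ZMod.val_lt (g i)
        have h2 : (g i).val ≠ 0 := fun h => hne i ((ZMod.val_eq_zero _).mp h)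
        omega
      refine ⟨fun i => ⟨(g i).val - 1, by have := hval i; omega⟩, ?_, ?_⟩
      · rw [mem_Bset_iff]
        have hemb : emb n (fun i => (⟨(g i).val - 1, by have := hval i; omega⟩ : Fin n)) = g := by
          funext i
          unfold emb
          have h1 := hval i
          show ((((g i).val - 1) + 1 : ℕ) : ZMod (n + 1)) = g i
          rw [show ((g i).val - 1) + 1 = (g i).val by omega]
          exact ZMod.natCast_rightInverse (g i)
        rw [hemb]
        exact hg
      · funext i
        unfold emb
        have h1 := hval i
        show ((((g i).val - 1) + 1 : ℕ) : ZMod (n + 1)) = g i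
        rw [show ((g i).val - 1) + 1 = (g i).val by omega]
        exact ZMod.natCast_rightInverse (g i)
  have hinj : ∀ x ∈ Bset m n k, ∀ y ∈ Bset m n k, emb n x = emb n y → x = y := by
    intro x _ y _ h
    funext i
    have hx := (x i).isLt
    have hy := (y i).isLt
    have := congrFun h i
    unfold emb at this
    have h2 : (x i : ℕ) + 1 = (y i : ℕ) + 1 := cast_inj (by omega) (by omega) this
    exact Fin.ext (by omega)
  rw [← himg, Finset.sum_image hinj]
  refine Finset.sum_congr rfl (fun a _ => ?_)
  rw [ties_eq_tiesZ]
  apply tiesZ_congr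
  intro i j
  constructor
  · intro h; unfold emb; rw [h]
  · intro h
    unfold emb at h
    have hx := (a i).isLt
    have hy := (a j).isLt
    have h2 : (a i : ℕ) + 1 = (a j : ℕ) + 1 := cast_inj (by omega) (by omega) h
    exact Fin.ext (by omega)

theorem rotation_sum (m n k : ℕ) (hmn : m ≤ n) :
    (n + 1) * ∑ g ∈ A0 m n k, tiesZ g =
      (n + 1 - m) * ∑ g : Fin m → ZMod (n + 1), tiesZ g := by
  have hcard : ∀ g : Fin m → ZMod (n + 1), (cPark k (List.ofFn g) ∅).card = m := by
    intro g
    have h := cPark_card k (List.ofFn g) ∅ (by rw [List.length_ofFn]; simp; omega)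
    simpa using h
  have hofn : ∀ (g : Fin m → ZMod (n + 1)) (c : ZMod (n + 1)),
      List.ofFn (fun i => g i + c) = (List.ofFn g).map (· + c) := by
    intro g c
    rw [List.map_ofFn]
    rfl
  have hOccAdd : ∀ (g : Fin m → ZMod (n + 1)) (c : ZMod (n + 1)),
      cPark k (List.ofFn (fun i => g i + c)) ∅ =
        (cPark k (List.ofFn g) ∅).image (· + c) := by
    intro g c
    rw [hofn]
    have h := cPark_add k (List.ofFn g) ∅ c (by rw [List.length_ofFn]; simp; omega)
    rwa [Finset.image_empty] at h
  have hmemc : ∀ (g : Fin m → ZMod (n + 1)) (c : ZMod (n + 1)),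
      (c ∈ (cPark k (List.ofFn g) ∅).image (· + c)) ↔
        (0 : ZMod (n + 1)) ∈ cPark k (List.ofFn g) ∅ := by
    intro g c
    rw [Finset.mem_image]
    constructor
    · rintro ⟨x, hx, hxc⟩
      have : x = 0 := by
        have h0 : x + c = 0 + c := by rw [hxc, zero_add]
        exact add_right_cancel h0
      exact this ▸ hx
    · intro h
      exact ⟨0, h, zero_add c⟩
  have htrans : ∀ c : ZMod (n + 1),
      ∑ g ∈ A0 m n k, tiesZ g =
        ∑ g ∈ Finset.univ.filter (fun g : Fin m → ZMod (n + 1) =>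
          c ∉ cPark k (List.ofFn g) ∅), tiesZ g := by
    intro c
    apply Finset.sum_nbij' (i := fun g => fun i => g i + c) (j := fun g => fun i => g i - c)
    · intro g hg
      rw [A0, Finset.mem_filter] at hg
      rw [Finset.mem_filter]
      refine ⟨Finset.mem_univ _, ?_⟩
      rw [hOccAdd, hmemc]
      exact hg.2
    · intro g hg
      rw [Finset.mem_filter] at hg
      rw [A0, Finset.mem_filter]
      refine ⟨Finset.mem_univ _, ?_⟩
      intro h0
      apply hg.2
      have h2 := hOccAdd (fun i => g i - c) c
      have heq : (fun i => (fun i => g i - c) i + c) = g := by funext i; simp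
      rw [heq] at h2
      rw [h2, Finset.mem_image]
      exact ⟨0, h0, zero_add c⟩
    · intro g _; funext i; ring
    · intro g _; funext i; ring
    · intro g _
      apply tiesZ_congr
      intro i j
      show g i = g j ↔ g i + c = g j + c
      exact (add_left_inj c).symm
  calc (n + 1) * ∑ g ∈ A0 m n k, tiesZ g
      = ∑ _c : ZMod (n + 1), ∑ g ∈ A0 m n k, tiesZ g := by
        rw [Finset.sum_const, Finset.card_univ, ZMod.card, smul_eq_mul]
    _ = ∑ c : ZMod (n + 1), ∑ g ∈ Finset.univ.filter (fun g : Fin m → ZMod (n + 1) =>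
          c ∉ cPark k (List.ofFn g) ∅), tiesZ g :=
        Finset.sum_congr rfl (fun c _ => htrans c)
    _ = ∑ c : ZMod (n + 1), ∑ g : Fin m → ZMod (n + 1),
          if c ∉ cPark k (List.ofFn g) ∅ then tiesZ g else 0 :=
        Finset.sum_congr rfl (fun c _ => Finset.sum_filter _ _)
    _ = ∑ g : Fin m → ZMod (n + 1), ∑ c : ZMod (n + 1),
          if c ∉ cPark k (List.ofFn g) ∅ then tiesZ g else 0 := Finset.sum_comm
    _ = ∑ g : Fin m → ZMod (n + 1), (n + 1 - m) * tiesZ g := by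
        refine Finset.sum_congr rfl (fun g _ => ?_)
        rw [← Finset.sum_filter]
        rw [Finset.sum_const]
        have hfil : Finset.univ.filter (fun c : ZMod (n + 1) =>
            c ∉ cPark k (List.ofFn g) ∅) = Finset.univ \ cPark k (List.ofFn g) ∅ := by
          ext c; simp
        rw [hfil, Finset.card_sdiff_of_subset (Finset.subset_univ _), Finset.card_univ, ZMod.card,
          hcard, smul_eq_mul]
    _ = (n + 1 - m) * ∑ g : Fin m → ZMod (n + 1), tiesZ g := by
        rw [Finset.mul_sum]

theorem PFset_eq_Bset0 (m n : ℕ) : PFset m n = Bset m n 0 := by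
  ext a
  rw [PFset, Bset, Finset.mem_filter, Finset.mem_filter]
  rw [contained_zero (prefList a) ∅ (prefList_Icc a)]

end TiesAux

theorem ties_equal (m n k : ℕ) (hm : 1 ≤ m) (hmn : m ≤ n) (hk : k ≤ n - 1) :
    ∑ f ∈ Bset m n k, ties f = ∑ g ∈ PFset m n, ties g := by
  have h1 := TiesAux.sum_B_eq_A0 m n k
  have h2 := TiesAux.sum_B_eq_A0 m n 0
  have h3 := TiesAux.rotation_sum m n k hmn
  have h4 := TiesAux.rotation_sum m n 0 hmn
  have h5 : ∑ g ∈ TiesAux.A0 m n k, TiesAux.tiesZ g =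
      ∑ g ∈ TiesAux.A0 m n 0, TiesAux.tiesZ g :=
    Nat.eq_of_mul_eq_mul_left (by omega) (h3.trans h4.symm)
  rw [TiesAux.PFset_eq_Bset0, h1, h2, h5]
end

section
/- For 1 ≤ m ≤ n and 0 ≤ k ≤ n-1, the map f ↦ f + k (adding k to every entry) is an injection from the classical (m,n)-parking functions PF(m,n) into the k-left obstructed (m,n)-parking functions LPF(m,n+k;k), and its image is exactly the set of elements of LPF(m,n+k;k) in which no car prefers an obstructed vertex. -/
lemma find?_shift (k : ℕ) (occ : Finset ℕ) (l : List ℕ) (hl : ∀ s ∈ l, 1 ≤ s) :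
    (l.map (· + k)).find? (fun s => decide (s ∉ (Finset.Icc 1 k ∪ occ.image (· + k))))
      = (l.find? (fun s => decide (s ∉ occ))).map (· + k) := by
  induction l with
  | nil => simp
  | cons a t ih =>
    have ha : 1 ≤ a := hl a (by simp)
    have key : (a + k ∉ Finset.Icc 1 k ∪ occ.image (· + k)) ↔ a ∉ occ := by
      simp only [Finset.mem_union, Finset.mem_image, Finset.mem_Icc, not_or]
      constructor
      · rintro ⟨-, h2⟩ hmem; exact h2 ⟨a, hmem, rfl⟩
      · intro h
        refine ⟨by omega, ?_⟩
        rintro ⟨x, hx, he⟩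
        have : x = a := by omega
        exact h (this ▸ hx)
    by_cases h : a ∈ occ
    · have h1 : a + k ∈ Finset.Icc 1 k ∪ occ.image (· + k) := by
        by_contra hc; exact (key.mp hc) h
      have d1 : decide (a + k ∉ Finset.Icc 1 k ∪ occ.image (· + k)) = false := by
        simp [h1]
      have d2 : decide (a ∉ occ) = false := by simp [h]
      simp only [List.map_cons, List.find?_cons, d1, d2]
      exact ih (fun s hs => hl s (by simp [hs]))
    · have h1 : a + k ∉ Finset.Icc 1 k ∪ occ.image (· + k) := key.mpr h
      have d1 : decide (a + k ∉ Finset.Icc 1 k ∪ occ.image (· + k)) = true := by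
        simp [h1]
      have d2 : decide (a ∉ occ) = true := by simp [h]
      simp only [List.map_cons, List.find?_cons, d1, d2]
      rfl

lemma park_shift (n k : ℕ) (l : List ℕ) : ∀ (occ : Finset ℕ), (∀ s ∈ l, 1 ≤ s) →
    classicalPark (n + k) (l.map (· + k)) (Finset.Icc 1 k ∪ occ.image (· + k))
      = (classicalPark n l occ).map (fun o => Finset.Icc 1 k ∪ o.image (· + k)) := by
  induction l with
  | nil => intro occ _; rfl
  | cons p t ih =>
    intro occ hl
    have hp : 1 ≤ p := hl p (by simp)
    have hfs : forwardSpot (n + k) (Finset.Icc 1 k ∪ occ.image (· + k)) (p + k)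
        = (forwardSpot n occ p).map (· + k) := by
      unfold forwardSpot
      have hr : List.range' (p + k) (n + k + 1 - (p + k))
          = (List.range' p (n + 1 - p)).map (· + k) := by
        have : (List.range' p (n + 1 - p)).map (· + k)
            = (List.range' p (n + 1 - p)).map (k + ·) := by
          apply List.map_congr_left; intro x _; omega
        rw [this, List.map_add_range']
        congr 1 <;> omega
      rw [hr]
      have hmem : ∀ s ∈ List.range' p (n + 1 - p), 1 ≤ s := by
        intro s hs
        have := List.mem_range'_1.mp hs
        omega
      exact find?_shift k occ _ hmem
    simp only [List.map_cons]
    show (match forwardSpot (n + k) (Finset.Icc 1 k ∪ occ.image (· + k)) (p + k) with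
      | none => none
      | some s => classicalPark (n + k) (t.map (· + k)) (insert s (Finset.Icc 1 k ∪ occ.image (· + k)))) = _
    rw [hfs]
    cases hfo : forwardSpot n occ p with
    | none => simp [classicalPark, hfo]
    | some s =>
      simp only [Option.map_some]
      have hins : insert (s + k) (Finset.Icc 1 k ∪ occ.image (· + k))
          = Finset.Icc 1 k ∪ (insert s occ).image (· + k) := by
        rw [Finset.image_insert, Finset.union_insert]
      rw [hins, ih _ (fun x hx => hl x (by simp [hx]))]
      simp [classicalPark, hfo]

lemma prefList_pos {m n : ℕ} (a : Fin m → Fin n) : ∀ s ∈ prefList a, 1 ≤ s := by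
  intro s hs
  simp only [prefList, List.mem_map] at hs
  obtain ⟨x, -, rfl⟩ := hs
  omega

lemma prefList_shift {m n k : ℕ} (a : Fin m → Fin n) (g : Fin m → Fin (n + k))
    (h : ∀ c, (g c : ℕ) = (a c : ℕ) + k) :
    prefList g = (prefList a).map (· + k) := by
  apply List.ext_getElem
  · simp [prefList, ← List.map_eq_flatMap]
  · intro i h1 h2
    simp [prefList, ← List.map_eq_flatMap, h]
    omega

lemma park_shift_isSome {m n k : ℕ} (a : Fin m → Fin n) (g : Fin m → Fin (n + k))
    (h : ∀ c, (g c : ℕ) = (a c : ℕ) + k) :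
    (classicalPark (n + k) (prefList g) (Finset.Icc 1 k)).isSome
      = (classicalPark n (prefList a) ∅).isSome := by
  rw [prefList_shift a g h]
  have := park_shift n k (prefList a) ∅ (prefList_pos a)
  simp only [Finset.image_empty, Finset.union_empty] at this
  rw [this, Option.isSome_map]

theorem shift_injection (m n k : ℕ) (hm : 1 ≤ m) (hmn : m ≤ n) (hk : k ≤ n - 1) :
    Set.InjOn (fun (a : Fin m → Fin n) (c : Fin m) =>
        (⟨(a c : ℕ) + k, by omega⟩ : Fin (n + k))) ↑(PFset m n) ∧
      (PFset m n).image (fun (a : Fin m → Fin n) (c : Fin m) =>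
          (⟨(a c : ℕ) + k, by omega⟩ : Fin (n + k))) =
        (LPFset m n k).filter (fun b => ∀ c, k < (b c : ℕ) + 1) := by
  constructor
  · intro a _ a' _ h
    funext c
    have := congrFun h c
    have h2 : (a c : ℕ) + k = (a' c : ℕ) + k := congrArg Fin.val this
    exact Fin.ext (Nat.add_right_cancel h2)
  · ext b
    simp only [Finset.mem_image, Finset.mem_filter, PFset, LPFset, Finset.mem_univ,
      true_and]
    constructor
    · rintro ⟨a, ha, rfl⟩
      have hg : ∀ c, ((fun (c : Fin m) => (⟨(a c : ℕ) + k, by omega⟩ : Fin (n + k))) c : ℕ)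
          = (a c : ℕ) + k := fun c => rfl
      refine ⟨?_, fun c => by simp⟩
      rw [park_shift_isSome a _ hg]
      exact ha
    · rintro ⟨hb, hbk⟩
      have hbk' : ∀ c, k ≤ (b c : ℕ) := fun c => by have := hbk c; omega
      have hlt : ∀ c : Fin m, (b c : ℕ) - k < n := by
        intro c; have := (b c).isLt; have := hbk' c; omega
      refine ⟨fun c => ⟨(b c : ℕ) - k, hlt c⟩, ?_, ?_⟩
      · have hg : ∀ c, (b c : ℕ) = ((b c : ℕ) - k) + k := fun c => by
          have := hbk' c; omega
        rw [← park_shift_isSome _ b hg]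
        exact hb
      · funext c
        exact Fin.ext (by simp; have := hbk' c; omega)
end

section
/- For 1 ≤ m ≤ n and 0 ≤ k ≤ n-1, there is an injection from the set PF(m,n;k) of k-Naples (m,n)-parking functions into the set LPF(m,n+k;k) of k-left obstructed (m,n)-parking functions; consequently |PF(m,n;k)| ≤ |LPF(m,n+k;k)|. -/
section Aux

lemma range'_find?_eq_some {occ : Finset ℕ} :
    ∀ (c p : ℕ) {s : ℕ},
    (List.range' p c).find? (fun s => decide (s ∉ occ)) = some s →
    s ∉ occ ∧ p ≤ s ∧ s < p + c ∧ ∀ t, p ≤ t → t < s → t ∈ occ := by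
  intro c
  induction c with
  | zero => intro p s h; simp at h
  | succ c ih =>
    intro p s h
    rw [List.range'_succ] at h
    by_cases hp : p ∈ occ
    · rw [List.find?_cons_of_neg (p := fun s => decide (s ∉ occ)) (a := p) (by simp [hp])] at h
      obtain ⟨h1, h2, h3, h4⟩ := ih (p + 1) h
      refine ⟨h1, by omega, by omega, ?_⟩
      intro t ht1 ht2
      rcases Nat.eq_or_lt_of_le ht1 with h' | h'
      · exact h' ▸ hp
      · exact h4 t h' ht2
    · rw [List.find?_cons_of_pos (p := fun s => decide (s ∉ occ)) (a := p) (by simp [hp])] at h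
      cases h
      exact ⟨hp, le_refl _, by omega, fun t h1 h2 => absurd h1 (by omega)⟩

lemma forwardSpot_eq_some {N p s : ℕ} {occ : Finset ℕ} (h : forwardSpot N occ p = some s) :
    s ∉ occ ∧ p ≤ s ∧ s ≤ N ∧ ∀ t, p ≤ t → t < s → t ∈ occ := by
  rw [forwardSpot] at h
  obtain ⟨h1, h2, h3, h4⟩ := range'_find?_eq_some _ _ h
  have hp : p ≤ N := by
    by_contra hcon
    have : N + 1 - p = 0 := by omega
    rw [this] at h
    simp at h
  exact ⟨h1, h2, by omega, h4⟩

lemma forwardSpot_isSome {N p : ℕ} {occ : Finset ℕ} (x : ℕ) (hx : x ∉ occ)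
    (h1 : p ≤ x) (h2 : x ≤ N) : (forwardSpot N occ p).isSome := by
  rw [forwardSpot, List.find?_isSome]
  exact ⟨x, by rw [List.mem_range'_1]; omega, by simpa using hx⟩

lemma naplesSpot_eq_some {n k p s : ℕ} {occ : Finset ℕ} (hp1 : 1 ≤ p) (hp2 : p ≤ n)
    (h : naplesSpot n k occ p = some s) :
    s ∉ occ ∧ 1 ≤ s ∧ s ≤ n ∧ p - k ≤ s := by
  rw [naplesSpot] at h
  by_cases hp : p ∈ occ
  · rw [if_pos hp] at h
    cases hb : (backwardCandidates k p).find? (fun s => decide (s ∉ occ)) with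
    | some s' =>
      rw [hb] at h
      cases h
      have hmem := List.mem_of_find?_eq_some hb
      have hocc : s ∉ occ := by simpa using List.find?_some hb
      rw [backwardCandidates, List.mem_filter] at hmem
      obtain ⟨hmem1, hmem2⟩ := hmem
      simp only [List.mem_map, List.mem_range] at hmem1
      obtain ⟨i, hi, rfl⟩ := hmem1
      have h1s : 1 ≤ p - (i + 1) := by simpa using hmem2
      exact ⟨hocc, h1s, by omega, by omega⟩
    | none =>
      rw [hb] at h
      obtain ⟨h1, h2, h3, _⟩ := forwardSpot_eq_some h
      exact ⟨h1, by omega, h3, by omega⟩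
  · rw [if_neg hp] at h
    cases h
    exact ⟨hp, hp1, hp2, by omega⟩

lemma flatMap_val {N : ℕ} (l : List (Fin N)) :
    (l.flatMap fun a => [Fin.val a]) = l.map Fin.val := by
  induction l with
  | nil => rfl
  | cons x xs ih => simp_all [List.flatMap]

lemma prefList_ofFn {m N : ℕ} (b : Fin m → Fin N) :
    prefList b = List.ofFn (fun i => (b i : ℕ) + 1) := by
  rw [prefList]
  simp only [List.bind_eq_flatMap, List.pure_def]
  rw [flatMap_val, List.map_map, List.map_ofFn]
  rfl

lemma key (n k : ℕ) : ∀ (l : List ℕ) (occN occC : Finset ℕ),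
    (∀ p ∈ l, 1 ≤ p ∧ p ≤ n) →
    Finset.Icc 1 k ⊆ occC →
    (∀ u, 1 ≤ u → ((Finset.Icc u n).filter (fun x => x ∉ occN)).card
        ≤ ((Finset.Icc (u + k) (n + k)).filter (fun x => x ∉ occC)).card) →
    (naplesPark n k l occN).isSome →
    (classicalPark (n + k) l occC).isSome := by
  intro l
  induction l with
  | nil => intro _ _ _ _ _ _; simp [classicalPark]
  | cons p rest ih =>
    intro occN occC hl hsub hinv hN
    obtain ⟨hp1, hp2⟩ := hl p List.mem_cons_self
    rw [naplesPark] at hN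
    cases hNs : naplesSpot n k occN p with
    | none => rw [hNs] at hN; simp at hN
    | some sN =>
      rw [hNs] at hN
      obtain ⟨hsN1, hsN2, hsN3, hsN4⟩ := naplesSpot_eq_some hp1 hp2 hNs
      -- the classical car finds a spot
      have hinv0 := hinv (max (p - k) 1) (le_max_right _ _)
      have hAmem : sN ∈ (Finset.Icc (max (p - k) 1) n).filter (fun x => x ∉ occN) := by
        simp only [Finset.mem_filter, Finset.mem_Icc]
        exact ⟨⟨by omega, hsN3⟩, hsN1⟩
      have hBpos : 0 < ((Finset.Icc (max (p - k) 1 + k) (n + k)).filter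
          (fun x => x ∉ occC)).card := by
        refine lt_of_lt_of_le ?_ hinv0
        exact Finset.card_pos.2 ⟨sN, hAmem⟩
      obtain ⟨x, hx⟩ := Finset.card_pos.1 hBpos
      simp only [Finset.mem_filter, Finset.mem_Icc] at hx
      have hfs : (forwardSpot (n + k) occC p).isSome :=
        forwardSpot_isSome x hx.2 (by omega) hx.1.2
      obtain ⟨sC, hsC⟩ := Option.isSome_iff_exists.1 hfs
      obtain ⟨hsC1, hsC2, hsC3, hsC4⟩ := forwardSpot_eq_some hsC
      rw [classicalPark, hsC]
      apply ih (insert sN occN) (insert sC occC)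
        (fun q hq => hl q (List.mem_cons_of_mem _ hq))
        (hsub.trans (Finset.subset_insert _ _)) ?_ hN
      -- invariant preservation
      intro u hu
      have hAeq : (Finset.Icc u n).filter (fun x => x ∉ insert sN occN)
          = ((Finset.Icc u n).filter (fun x => x ∉ occN)).erase sN := by
        ext y
        simp only [Finset.mem_filter, Finset.mem_erase, Finset.mem_insert, Finset.mem_Icc]
        tauto
      have hBeq : (Finset.Icc (u + k) (n + k)).filter (fun x => x ∉ insert sC occC)
          = ((Finset.Icc (u + k) (n + k)).filter (fun x => x ∉ occC)).erase sC := by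
        ext y
        simp only [Finset.mem_filter, Finset.mem_erase, Finset.mem_insert, Finset.mem_Icc]
        tauto
      set A := (Finset.Icc u n).filter (fun x => x ∉ occN) with hA
      set B := (Finset.Icc (u + k) (n + k)).filter (fun x => x ∉ occC) with hB
      rw [hAeq, hBeq]
      by_cases hc : sC ∈ B
      · by_cases hn' : sN ∈ A
        · rw [Finset.card_erase_of_mem hn', Finset.card_erase_of_mem hc]
          exact Nat.sub_le_sub_right (hinv u hu) 1
        · -- strict case
          rw [Finset.erase_eq_of_notMem hn', Finset.card_erase_of_mem hc]
          have husN : sN < u := by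
            simp only [hA, Finset.mem_filter, Finset.mem_Icc] at hn'
            push_neg at hn'
            by_contra hcon
            exact hsN1 (hn' ⟨by omega, hsN3⟩)
          have hcb : u + k ≤ sC := by
            simp only [hB, Finset.mem_filter, Finset.mem_Icc] at hc
            exact hc.1.1
          -- chain: card A + 1 ≤ card A(u₀) ≤ card B(u₀) ≤ card B
          have hsub2 : (Finset.Icc (max (p - k) 1 + k) (n + k)).filter
              (fun x => x ∉ occC) ⊆ B := by
            intro y hy
            simp only [Finset.mem_filter, Finset.mem_Icc] at hy
            simp only [hB, Finset.mem_filter, Finset.mem_Icc]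
            refine ⟨⟨?_, hy.1.2⟩, hy.2⟩
            -- y free, y ≥ p, so y ≥ sC ≥ u + k
            by_contra hcon
            push_neg at hcon
            exact hy.2 (hsC4 y (by omega) (by omega))
          have hsub1 : insert sN A ⊆ (Finset.Icc (max (p - k) 1) n).filter
              (fun x => x ∉ occN) := by
            intro y hy
            rcases Finset.mem_insert.1 hy with rfl | hy'
            · exact hAmem
            · simp only [hA, Finset.mem_filter, Finset.mem_Icc] at hy'
              simp only [Finset.mem_filter, Finset.mem_Icc]
              exact ⟨⟨by omega, hy'.1.2⟩, hy'.2⟩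
          have hcard1 : A.card + 1 ≤ ((Finset.Icc (max (p - k) 1) n).filter
              (fun x => x ∉ occN)).card := by
            have := Finset.card_le_card hsub1
            rwa [Finset.card_insert_of_notMem hn'] at this
          have hcard2 := Finset.card_le_card hsub2
          have hBpos' : 1 ≤ B.card := Finset.card_pos.2 ⟨sC, hc⟩
          omega
      · rw [Finset.erase_eq_of_notMem hc]
        exact le_trans (Finset.card_le_card (Finset.erase_subset _ _)) (hinv u hu)

end Aux

theorem naples_into_obstructed (m n k : ℕ) (hm : 1 ≤ m) (hmn : m ≤ n) (hk : k ≤ n - 1) :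
    (∃ F : (Fin m → Fin n) → (Fin m → Fin (n + k)),
        (∀ a ∈ NPFset m n k, F a ∈ LPFset m n k) ∧
          Set.InjOn F ↑(NPFset m n k)) ∧
      (NPFset m n k).card ≤ (LPFset m n k).card := by
  classical
  set F : (Fin m → Fin n) → (Fin m → Fin (n + k)) :=
    fun a i => ⟨(a i : ℕ), lt_of_lt_of_le (a i).isLt (Nat.le_add_right n k)⟩ with hF
  have hpref : ∀ a : Fin m → Fin n, prefList (F a) = prefList a := by
    intro a
    rw [prefList_ofFn, prefList_ofFn]
  have hmaps : ∀ a ∈ NPFset m n k, F a ∈ LPFset m n k := by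
    intro a ha
    rw [NPFset, Finset.mem_filter] at ha
    rw [LPFset, Finset.mem_filter]
    refine ⟨Finset.mem_univ _, ?_⟩
    rw [hpref]
    apply key n k (prefList a) ∅ (Finset.Icc 1 k) ?_ (le_refl _) ?_ ha.2
    · intro p hp
      rw [prefList_ofFn, List.mem_ofFn] at hp
      obtain ⟨i, hi⟩ := hp
      have h2 : (a i : ℕ) + 1 = p := hi
      have := (a i).isLt
      omega
    · intro u hu
      have e1 : (Finset.Icc u n).filter (fun x => x ∉ (∅ : Finset ℕ)) = Finset.Icc u n := by
        simp
      have e2 : (Finset.Icc (u + k) (n + k)).filter (fun x => x ∉ Finset.Icc 1 k)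
          = Finset.Icc (u + k) (n + k) := by
        apply Finset.filter_true_of_mem
        intro x hx
        simp only [Finset.mem_Icc] at hx ⊢
        omega
      rw [e1, e2, Nat.card_Icc, Nat.card_Icc]
      omega
  have hinj : Set.InjOn F ↑(NPFset m n k) := by
    intro a _ b _ h
    funext i
    have := congrFun h i
    simp only [hF, Fin.mk.injEq] at this
    exact Fin.ext this
  exact ⟨⟨F, hmaps, hinj⟩, Finset.card_le_card_of_injOn F hmaps hinj⟩
end

section
/- For 1 ≤ m ≤ n and 1 ≤ k ≤ n-1, the inequality |PF(m,n;k)| < |LPF(m,n+k;k)| is strict. -/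
section Aux

open Finset List

lemma forwardSpot_spec (N : ℕ) (occ : Finset ℕ) :
    ∀ fuel p x, N - p ≤ fuel → p ≤ x → x ≤ N → x ∉ occ →
    ∃ s, forwardSpot N occ p = some s ∧ p ≤ s ∧ s ≤ N ∧ s ∉ occ ∧
      ∀ y, p ≤ y → y < s → y ∈ occ := by
  intro fuel
  induction fuel with
  | zero =>
    intro p x hf hpx hxN hx
    have hxp : x = p := by omega
    subst hxp
    refine ⟨x, ?_, le_refl _, hxN, hx, by omega⟩
    unfold forwardSpot
    have h1 : N + 1 - x = 1 := by omega
    rw [h1, List.range'_one]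
    exact List.find?_cons_of_pos (decide_eq_true hx)
  | succ fuel ih =>
    intro p x hf hpx hxN hx
    have hpN : p ≤ N := le_trans hpx hxN
    by_cases hp : p ∈ occ
    · have hne : x ≠ p := fun h => hx (h ▸ hp)
      have hpx1 : p + 1 ≤ x := by omega
      obtain ⟨s, hfind, hs1, hs2, hs3, hmin⟩ := ih (p+1) x (by omega) hpx1 hxN hx
      refine ⟨s, ?_, by omega, hs2, hs3, ?_⟩
      · unfold forwardSpot at hfind ⊢
        have h1 : N + 1 - p = (N - p) + 1 := by omega
        have h2 : N + 1 - (p+1) = N - p := by omega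
        rw [h1, List.range'_succ, List.find?_cons_of_neg]
        · rw [h2] at hfind; exact hfind
        · simp [hp]
      · intro y hy1 hy2
        rcases Nat.eq_or_lt_of_le hy1 with h | h
        · exact h ▸ hp
        · exact hmin y h hy2
    · refine ⟨p, ?_, le_refl _, hpN, hp, by omega⟩
      unfold forwardSpot
      have h1 : N + 1 - p = (N - p) + 1 := by omega
      rw [h1, List.range'_succ]
      exact List.find?_cons_of_pos (decide_eq_true hp)

lemma naplesSpot_spec (n k : ℕ) (occ : Finset ℕ) (p s : ℕ) (hp1 : 1 ≤ p) (hpn : p ≤ n)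
    (h : naplesSpot n k occ p = some s) : s ∉ occ ∧ p - k ≤ s ∧ s ≤ n := by
  unfold naplesSpot at h
  by_cases hmem : p ∈ occ
  · rw [if_pos hmem] at h
    cases hfind : (backwardCandidates k p).find? (fun s => decide (s ∉ occ)) with
    | some s' =>
      rw [hfind] at h
      have h' : some s' = some s := h
      have heq : s' = s := by injection h'
      have hpred := List.find?_some hfind
      have hs_not : s' ∉ occ := of_decide_eq_true hpred
      have hmem' := List.mem_of_find?_eq_some hfind
      unfold backwardCandidates at hmem'
      rw [List.mem_filter] at hmem'
      obtain ⟨hmem2, hge1⟩ := hmem'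
      rw [List.mem_map] at hmem2
      obtain ⟨i, hi, heq2⟩ := hmem2
      rw [List.mem_range] at hi
      rw [← heq]
      exact ⟨hs_not, by omega, by omega⟩
    | none =>
      rw [hfind] at h
      have h' : forwardSpot n occ p = some s := h
      have hpred := List.find?_some h'
      have hs_not : s ∉ occ := of_decide_eq_true hpred
      have hmem' := List.mem_of_find?_eq_some h'
      rw [List.mem_range'_1] at hmem'
      exact ⟨hs_not, by omega, by omega⟩
  · rw [if_neg hmem] at h
    obtain rfl : p = s := by injection h
    exact ⟨hmem, by omega, hpn⟩

lemma naplesPark_count (n k : ℕ) :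
    ∀ (l : List ℕ) (occ occ' : Finset ℕ), (∀ p ∈ l, 1 ≤ p ∧ p ≤ n) →
      naplesPark n k l occ = some occ' →
      ∀ t, (occ ∩ Finset.Icc t n).card + l.countP (fun p => decide (t + k ≤ p))
        ≤ (occ' ∩ Finset.Icc t n).card := by
  intro l
  induction l with
  | nil =>
    intro occ occ' _ h t
    have h' : some occ = some occ' := h
    obtain rfl : occ = occ' := by injection h'
    simp
  | cons p rest ih =>
    intro occ occ' hl h t
    cases hspot : naplesSpot n k occ p with
    | none =>
      simp only [naplesPark, hspot] at h
      exact absurd h (by simp)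
    | some s =>
      simp only [naplesPark, hspot] at h
      obtain ⟨hs1, hs2, hs3⟩ :=
        naplesSpot_spec n k occ p s (hl p (by simp)).1 (hl p (by simp)).2 hspot
      have key := ih (insert s occ) occ' (fun q hq => hl q (by simp [hq])) h t
      rw [List.countP_cons]
      by_cases hc : t + k ≤ p
      · have hsIn : s ∈ Finset.Icc t n := by rw [Finset.mem_Icc]; omega
        have heq : (insert s occ ∩ Finset.Icc t n) = insert s (occ ∩ Finset.Icc t n) :=
          Finset.insert_inter_of_mem hsIn
        have hcard : (insert s occ ∩ Finset.Icc t n).card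
            = (occ ∩ Finset.Icc t n).card + 1 := by
          rw [heq, Finset.card_insert_of_notMem (fun hx => hs1 (Finset.mem_inter.mp hx).1)]
        simp only [decide_eq_true_eq, if_pos hc]
        omega
      · have hsub : (occ ∩ Finset.Icc t n).card ≤ (insert s occ ∩ Finset.Icc t n).card :=
          Finset.card_le_card
            (Finset.inter_subset_inter (Finset.subset_insert s occ) (Finset.Subset.refl _))
        simp only [decide_eq_true_eq, if_neg hc]
        omega

lemma classicalPark_isSome (N : ℕ) :
    ∀ (l : List ℕ) (occ : Finset ℕ), (∀ p ∈ l, 1 ≤ p) →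
      (∀ t, l.countP (fun p => decide (t ≤ p)) ≤ (Finset.Icc t N \ occ).card) →
      (classicalPark N l occ).isSome := by
  intro l
  induction l with
  | nil => intro occ _ _; simp [classicalPark]
  | cons p rest ih =>
    intro occ hl hcond
    have h2 := hcond p
    rw [List.countP_cons] at h2
    simp only [decide_eq_true_eq, if_pos (le_refl p)] at h2
    have hne : (Finset.Icc p N \ occ).Nonempty := Finset.card_pos.mp (by omega)
    obtain ⟨x, hx⟩ := hne
    rw [Finset.mem_sdiff, Finset.mem_Icc] at hx
    obtain ⟨s, hfind, hps, hsN, hsocc, hmin⟩ :=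
      forwardSpot_spec N occ (N - p) p x le_rfl hx.1.1 hx.1.2 hx.2
    simp only [classicalPark, hfind]
    apply ih
    · exact fun q hq => hl q (by simp [hq])
    · intro t
      rcases le_or_gt t p with htp | hpt
      · have hsmem : s ∈ Finset.Icc t N \ occ := by
          rw [Finset.mem_sdiff, Finset.mem_Icc]; exact ⟨⟨by omega, hsN⟩, hsocc⟩
        have heq : Finset.Icc t N \ insert s occ = (Finset.Icc t N \ occ).erase s := by
          ext y
          simp only [Finset.mem_sdiff, Finset.mem_erase, Finset.mem_insert]
          tauto
        rw [heq, Finset.card_erase_of_mem hsmem]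
        have hcnt := hcond t
        rw [List.countP_cons] at hcnt
        simp only [decide_eq_true_eq, if_pos htp] at hcnt
        have hpos : 1 ≤ (Finset.Icc t N \ occ).card := Finset.card_pos.mpr ⟨s, hsmem⟩
        omega
      · rcases le_or_gt t s with hts | hst
        · have hIccEq : Finset.Icc p N \ occ = Finset.Icc t N \ occ := by
            ext y
            simp only [Finset.mem_sdiff, Finset.mem_Icc]
            constructor
            · rintro ⟨⟨hy1, hy2⟩, hy3⟩
              refine ⟨⟨?_, hy2⟩, hy3⟩
              by_contra hlt
              exact hy3 (hmin y hy1 (by omega))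
            · rintro ⟨⟨hy1, hy2⟩, hy3⟩; exact ⟨⟨by omega, hy2⟩, hy3⟩
          have hsmem : s ∈ Finset.Icc t N \ occ := by
            rw [Finset.mem_sdiff, Finset.mem_Icc]; exact ⟨⟨hts, hsN⟩, hsocc⟩
          have heq : Finset.Icc t N \ insert s occ = (Finset.Icc t N \ occ).erase s := by
            ext y
            simp only [Finset.mem_sdiff, Finset.mem_erase, Finset.mem_insert]
            tauto
          rw [heq, Finset.card_erase_of_mem hsmem]
          have hmono : rest.countP (fun q => decide (t ≤ q))
              ≤ rest.countP (fun q => decide (p ≤ q)) := by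
            apply List.countP_mono_left
            intro y _ hy
            simp only [decide_eq_true_eq] at hy ⊢
            omega
          have hcnt := hcond p
          rw [List.countP_cons] at hcnt
          simp only [decide_eq_true_eq, if_pos (le_refl p)] at hcnt
          rw [hIccEq] at hcnt
          have hpos : 1 ≤ (Finset.Icc t N \ occ).card := Finset.card_pos.mpr ⟨s, hsmem⟩
          omega
        · have heq : Finset.Icc t N \ insert s occ = Finset.Icc t N \ occ := by
            ext y
            simp only [Finset.mem_sdiff, Finset.mem_Icc, Finset.mem_insert]
            constructor
            · rintro ⟨hy1, hy2⟩; exact ⟨hy1, fun hy => hy2 (Or.inr hy)⟩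
            · rintro ⟨hy1, hy2⟩
              refine ⟨hy1, fun hy => ?_⟩
              rcases hy with rfl | hy
              · omega
              · exact hy2 hy
          rw [heq]
          have hcnt := hcond t
          rw [List.countP_cons] at hcnt
          have hnt : ¬ (t ≤ p) := by omega
          simp only [decide_eq_true_eq, if_neg hnt] at hcnt
          omega

lemma flatMap_sing {α β : Type*} (l : List α) (f : α → β) :
    (l.flatMap fun a => [f a]) = l.map f := by
  induction l with
  | nil => rfl
  | cons a l ih => simp [List.flatMap_cons, ih]

lemma prefList_eq {m n : ℕ} (a : Fin m → Fin n) :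
    prefList a = List.ofFn (fun i => ((a i : ℕ) + 1)) := by
  show (List.map (fun x => x + 1) ((List.ofFn a).flatMap fun (a : Fin n) => [(a : ℕ)])) = _
  rw [flatMap_sing, List.map_map, List.map_ofFn]
  rfl

lemma prefList_bounds {m n : ℕ} (a : Fin m → Fin n) : ∀ p ∈ prefList a, 1 ≤ p ∧ p ≤ n := by
  intro p hp
  rw [prefList_eq, List.mem_ofFn] at hp
  obtain ⟨i, rfl⟩ := hp
  show 1 ≤ (a i : ℕ) + 1 ∧ (a i : ℕ) + 1 ≤ n
  have := (a i).isLt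
  omega

lemma mem_LPF_of_NPF {m n k : ℕ} (hm : m ≤ n) (a : Fin m → Fin n)
    (ha : (naplesPark n k (prefList a) ∅).isSome) :
    (classicalPark (n + k) (prefList a) (Finset.Icc 1 k)).isSome := by
  obtain ⟨occ', hocc⟩ := Option.isSome_iff_exists.mp ha
  apply classicalPark_isSome
  · exact fun p hp => (prefList_bounds a p hp).1
  · intro t
    by_cases htk : t ≤ k
    · calc (prefList a).countP (fun p => decide (t ≤ p)) ≤ (prefList a).length :=
            List.countP_le_length
        _ = m := by rw [prefList_eq]; simp
        _ ≤ n := hm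
        _ ≤ (Finset.Icc t (n+k) \ Finset.Icc 1 k).card := by
            have hsub : Finset.Icc (k+1) (n+k) ⊆ Finset.Icc t (n+k) \ Finset.Icc 1 k := by
              intro x hx
              rw [Finset.mem_Icc] at hx
              rw [Finset.mem_sdiff, Finset.mem_Icc, Finset.mem_Icc]
              omega
            have hcl := Finset.card_le_card hsub
            rw [Nat.card_Icc] at hcl
            omega
    · have hkt : k ≤ t := by omega
      have hkey := naplesPark_count n k (prefList a) ∅ occ' (prefList_bounds a) hocc (t - k)
      simp only [Finset.empty_inter, Finset.card_empty, Nat.zero_add,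
        Nat.sub_add_cancel hkt] at hkey
      have hb : (occ' ∩ Finset.Icc (t-k) n).card ≤ n + 1 - (t - k) := by
        calc (occ' ∩ Finset.Icc (t-k) n).card ≤ (Finset.Icc (t-k) n).card :=
              Finset.card_le_card Finset.inter_subset_right
          _ = n + 1 - (t-k) := Nat.card_Icc _ _
      have hdisj : Finset.Icc t (n+k) \ Finset.Icc 1 k = Finset.Icc t (n+k) := by
        ext x
        simp only [Finset.mem_sdiff, Finset.mem_Icc]
        omega
      rw [hdisj, Nat.card_Icc]
      omega

lemma witness_parks (n k m' : ℕ) (hn : 1 ≤ n) (hk : 1 ≤ k) (hm : m' + 1 ≤ n) :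
    (classicalPark (n + k) ((n + k) :: List.replicate m' 1) (Finset.Icc 1 k)).isSome := by
  have hfs : forwardSpot (n + k) (Finset.Icc 1 k) (n + k) = some (n + k) := by
    unfold forwardSpot
    have h1 : n + k + 1 - (n + k) = 1 := by omega
    rw [h1, List.range'_one]
    apply List.find?_cons_of_pos
    apply decide_eq_true
    rw [Finset.mem_Icc]
    omega
  simp only [classicalPark, hfs]
  apply classicalPark_isSome
  · intro p hp
    rw [List.mem_replicate] at hp
    omega
  · intro t
    rw [List.countP_replicate]
    by_cases ht : t ≤ 1
    · rw [if_pos (decide_eq_true ht)]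
      have hsub : Finset.Icc (k+1) (n+k-1)
          ⊆ Finset.Icc t (n+k) \ insert (n+k) (Finset.Icc 1 k) := by
        intro x hx
        rw [Finset.mem_Icc] at hx
        rw [Finset.mem_sdiff, Finset.mem_Icc, Finset.mem_insert, Finset.mem_Icc]
        constructor
        · omega
        · rintro (rfl | hmem) <;> omega
      have hcl := Finset.card_le_card hsub
      rw [Nat.card_Icc] at hcl
      omega
    · rw [if_neg]
      · omega
      · simp only [decide_eq_true_eq]
        omega

end Aux

theorem naples_lt_obstructed (m n k : ℕ) (hm : 1 ≤ m) (hmn : m ≤ n)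
    (hk1 : 1 ≤ k) (hk : k ≤ n - 1) :
    (NPFset m n k).card < (LPFset m n k).card := by
  obtain ⟨m', rfl⟩ : ∃ m', m = m' + 1 := ⟨m - 1, by omega⟩
  have hnk : (n : ℕ) ≤ n + k := by omega
  set emb : (Fin (m'+1) → Fin n) ↪ (Fin (m'+1) → Fin (n+k)) :=
    ⟨fun a => (Fin.castLE hnk) ∘ a, by
      intro a b h
      funext i
      exact Fin.castLE_injective hnk (congrFun h i)⟩ with hemb
  have hpref : ∀ a : Fin (m'+1) → Fin n, prefList (emb a) = prefList a := by
    intro a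
    rw [prefList_eq, prefList_eq]
    refine congrArg List.ofFn ?_
    funext i
    simp [hemb]
    rfl
  rw [← Finset.card_map emb (s := NPFset (m'+1) n k)]
  apply Finset.card_lt_card
  constructor
  · intro q hq
    rw [Finset.mem_map] at hq
    obtain ⟨a, ha, rfl⟩ := hq
    rw [NPFset, Finset.mem_filter] at ha
    rw [LPFset, Finset.mem_filter]
    refine ⟨Finset.mem_univ _, ?_⟩
    rw [hpref]
    exact mem_LPF_of_NPF hmn a ha.2
  · intro hsub
    set w : Fin (m'+1) → Fin (n+k) :=
      Fin.cons ⟨n + k - 1, by omega⟩ (fun _ => ⟨0, by omega⟩) with hw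
    have hwpref : prefList w = (n + k) :: List.replicate m' 1 := by
      rw [prefList_eq, hw, List.ofFn_succ]
      simp only [Fin.cons_zero, Fin.cons_succ, List.ofFn_const]
      congr 1
      · show n + k - 1 + 1 = n + k
        omega
    have hwmem : w ∈ LPFset (m'+1) n k := by
      rw [LPFset, Finset.mem_filter]
      refine ⟨Finset.mem_univ _, ?_⟩
      rw [hwpref]
      exact witness_parks n k m' (by omega) hk1 hmn
    have := hsub hwmem
    rw [Finset.mem_map] at this
    obtain ⟨a, _, hae⟩ := this
    have h0 := congrFun hae 0
    rw [hemb] at h0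
    change Fin.castLE hnk (a 0) = w 0 at h0
    have hval : ((a 0 : ℕ)) = n + k - 1 := by
      have := congrArg Fin.val h0
      simpa [hw] using this
    have := (a 0).isLt
    omega
end
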